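/- The q-Catalan number satisfies C_n(q) = (1/[n+1]_q) · [2n]_q!/([n]_q!)² = ∏_{t=2}^n [t+n]_q/[t]_q as rational functions (and C_n(q) is a polynomial). -/

import Mathlib

open Finset Polynomial

/-- The `q`-integer `[t]_q = 1 + q + ⋯ + q^{t-1}` as a polynomial. -/
noncomputable def qInt (t : ℕ) : Polynomial ℚ :=
  ∑ i ∈ Finset.range t, Polynomial.X ^ i

/-- The `q`-factorial `[n]_q! = ∏_{t=1}^n [t]_q`. -/
noncomputable def qFact (n : ℕ) : Polynomial ℚ :=
  ∏ t ∈ Finset.Icc 1 n, qInt t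

/-- The images in the field of rational functions. -/
noncomputable def toRF (p : Polynomial ℚ) : RatFunc ℚ :=
  algebraMap (Polynomial ℚ) (RatFunc ℚ) p

lemma qInt_one : qInt 1 = 1 := by simp [qInt]

lemma qInt_ne_zero {t : ℕ} (ht : t ≠ 0) : qInt t ≠ 0 := by
  intro h
  have : (qInt t).eval 1 = 0 := by rw [h]; simp
  rw [qInt] at this
  simp [Polynomial.eval_finset_sum] at this
  omega

lemma qFact_ne_zero (n : ℕ) : qFact n ≠ 0 := by
  rw [qFact]
  exact Finset.prod_ne_zero_iff.2 fun t ht => qInt_ne_zero (by simp at ht; omega)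

lemma toRF_ne_zero {p : Polynomial ℚ} (hp : p ≠ 0) : toRF p ≠ 0 := by
  rw [toRF]
  exact fun h => hp ((map_eq_zero_iff (algebraMap (Polynomial ℚ) (RatFunc ℚ))
    (IsFractionRing.injective _ _)).1 h)

lemma qInt_add (a b : ℕ) : qInt (a + b) = qInt a + X ^ a * qInt b := by
  rw [qInt, qInt, qInt, Finset.sum_range_add, Finset.mul_sum]
  simp [pow_add]

lemma qFact_eq (n : ℕ) : qFact n = ∏ i ∈ Finset.range n, qInt (1 + i) := by
  rw [qFact, ← Finset.Ico_add_one_right_eq_Icc, Finset.prod_Ico_eq_prod_range]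
  simp

lemma qFact_two_mul (n : ℕ) :
    qFact (2 * n) = qFact n * ∏ i ∈ Finset.range n, qInt (1 + n + i) := by
  rw [qFact_eq, qFact_eq, two_mul, Finset.prod_range_add]
  ring_nf

noncomputable def gauss : ℕ → ℕ → Polynomial ℚ
  | _, 0 => 1
  | 0, _+1 => 0
  | m+1, k+1 => X ^ (k+1) * gauss m (k+1) + gauss m k

lemma gauss_eq_zero : ∀ {m k : ℕ}, m < k → gauss m k = 0
  | 0, _+1, _ => rfl
  | m+1, k+1, h => by
    rw [gauss, gauss_eq_zero (by omega), gauss_eq_zero (by omega)]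
    ring

lemma qFact_succ (n : ℕ) : qFact (n + 1) = qFact n * qInt (n + 1) := by
  rw [qFact, qFact, Finset.prod_Icc_succ_top (by omega)]

lemma gauss_key : ∀ m k : ℕ, k ≤ m →
    toRF (gauss m k) = toRF (qFact m) / (toRF (qFact k) * toRF (qFact (m - k)))
  | 0, 0, _ => by norm_num [gauss, qFact, toRF]
  | m+1, 0, _ => by
    show toRF 1 = _
    have hF := toRF_ne_zero (qFact_ne_zero (m+1))
    have h0 : qFact 0 = 1 := by simp [qFact]
    rw [Nat.sub_zero, h0]
    simp only [toRF, map_one, one_mul] at *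
    field_simp
  | m+1, k+1, h => by
    rcases eq_or_lt_of_le h with he | hlt
    · -- k + 1 = m + 1
      have hk : k = m := by omega
      subst hk
      rw [gauss, gauss_eq_zero (by omega)]
      have ih := gauss_key k k le_rfl
      simp only [Nat.sub_self] at ih ⊢
      have h0 : toRF (qFact 0) = 1 := by simp [qFact, toRF]
      rw [h0] at ih ⊢
      have hFm := toRF_ne_zero (qFact_ne_zero k)
      have hFm1 := toRF_ne_zero (qFact_ne_zero (k+1))
      simp only [map_add, map_mul, map_zero] at *
      rw [mul_zero, zero_add, ih]
      field_simp
    · have hk : k + 1 ≤ m := by omega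
      have ih1 := gauss_key m (k+1) hk
      have ih2 := gauss_key m k (by omega)
      have hsub : m + 1 - (k + 1) = (m - (k+1)) + 1 := by omega
      have hsub2 : m - k = (m - (k+1)) + 1 := by omega
      have hq : qInt (m + 1) = qInt (k + 1) + X ^ (k+1) * qInt ((m - (k+1)) + 1) := by
        have := qInt_add (k+1) (m - (k+1) + 1)
        rwa [show k + 1 + (m - (k+1) + 1) = m + 1 by omega] at this
      rw [gauss]
      have e1 : toRF (X ^ (k+1) * gauss m (k+1) + gauss m k)
          = toRF (X ^ (k+1)) * toRF (gauss m (k+1)) + toRF (gauss m k) := by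
        simp [toRF]
      rw [e1, ih1, ih2, qFact_succ m, hsub, qFact_succ (m - (k+1)), hsub2,
        qFact_succ (m - (k+1)), qFact_succ k, hq]
      have A := toRF_ne_zero (qFact_ne_zero m)
      have B := toRF_ne_zero (qFact_ne_zero k)
      have Cc := toRF_ne_zero (qFact_ne_zero (m - (k+1)))
      have D := toRF_ne_zero (qInt_ne_zero (show k+1 ≠ 0 by omega))
      have E := toRF_ne_zero (qInt_ne_zero (show m - (k+1) + 1 ≠ 0 by omega))
      simp only [map_mul, map_add, map_pow, toRF] at *
      field_simp
      ring

lemma part1 (n : ℕ) :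
    toRF (qFact (2 * n)) / (toRF (qInt (n + 1)) * (toRF (qFact n)) ^ 2)
      = ∏ t ∈ Finset.Icc 2 n, toRF (qInt (t + n)) / toRF (qInt t) := by
  rcases n with _ | m
  · simp [qFact, qInt, toRF]
  set n := m + 1 with hn
  have hnum : qFact (2*n) = qFact n * ((∏ i ∈ Finset.range m, qInt (2 + i + n)) * qInt (n+1)) := by
    rw [qFact_two_mul, Finset.prod_range_succ']
    congr 2
    · apply Finset.prod_congr rfl; intro i _; congr 1; omega
    · congr 1; omega
  have hden : qFact n = ∏ i ∈ Finset.range m, qInt (2 + i) := by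
    rw [qFact_eq, Finset.prod_range_succ', qInt_one, mul_one]
    apply Finset.prod_congr rfl; intro i _; congr 1; omega
  have hrhs : Finset.Icc 2 n = Finset.Ico 2 (m+2) := by rw [← Finset.Ico_add_one_right_eq_Icc]; rfl
  rw [hrhs, Finset.prod_Ico_eq_prod_range]
  simp only [show m + 2 - 2 = m from rfl]
  rw [Finset.prod_div_distrib]
  simp only [toRF]
  rw [← map_prod (algebraMap (Polynomial ℚ) (RatFunc ℚ)),
    ← map_prod (algebraMap (Polynomial ℚ) (RatFunc ℚ))]
  have hFn := toRF_ne_zero (qFact_ne_zero n)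
  have hIn1 := toRF_ne_zero (qInt_ne_zero (show n+1 ≠ 0 by omega))
  have hPden : toRF (∏ i ∈ Finset.range m, qInt (2 + i)) ≠ 0 := by
    rw [← hden]; exact hFn
  rw [hnum]
  simp only [toRF, map_mul] at *
  rw [← hden]
  field_simp

lemma part2 (n : ℕ) : ∃ C : Polynomial ℚ,
    toRF C = toRF (qFact (2 * n)) / (toRF (qInt (n + 1)) * (toRF (qFact n)) ^ 2) := by
  rcases n with _ | m
  · exact ⟨1, by simp [qFact, qInt, toRF]⟩
  refine ⟨gauss (2*(m+1)) (m+1) - X * gauss (2*(m+1)) (m+1+1), ?_⟩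
  have h1 := gauss_key (2*(m+1)) (m+1) (by omega)
  have h2 := gauss_key (2*(m+1)) (m+1+1) (by omega)
  rw [show 2*(m+1) - (m+1) = m+1 from by omega] at h1
  rw [show 2*(m+1) - (m+1+1) = m from by omega] at h2
  have e : toRF (gauss (2*(m+1)) (m+1) - X * gauss (2*(m+1)) (m+1+1))
      = toRF (gauss (2*(m+1)) (m+1)) - toRF X * toRF (gauss (2*(m+1)) (m+1+1)) := by
    simp [toRF]
  have hFn : toRF (qFact (m+1)) = toRF (qFact m) * toRF (qInt (m+1)) := by
    rw [qFact_succ]; simp [toRF]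
  have hFn1 : toRF (qFact (m+1+1))
      = toRF (qFact m) * toRF (qInt (m+1)) * toRF (qInt (m+1+1)) := by
    rw [qFact_succ (m+1), qFact_succ m]; simp [toRF]
  have hq : toRF (qInt (m+1+1)) = 1 + toRF X * toRF (qInt (m+1)) := by
    have h := qInt_add 1 (m+1)
    rw [show 1 + (m+1) = m+1+1 from by omega, qInt_one, pow_one] at h
    rw [h]; simp [toRF]
  have hFm := toRF_ne_zero (qFact_ne_zero m)
  have hIn := toRF_ne_zero (qInt_ne_zero (show m+1 ≠ 0 by omega))
  have hIn1 := toRF_ne_zero (qInt_ne_zero (show m+1+1 ≠ 0 by omega))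
  rw [hq] at hIn1
  rw [e, h1, h2, hFn1, hFn, hq]
  have key : ∀ (A F I x : RatFunc ℚ), F ≠ 0 → I ≠ 0 → (1 + x * I) ≠ 0 →
      A / (F * I * (F * I)) - x * (A / (F * I * (1 + x * I) * F))
        = A / ((1 + x * I) * (F * I) ^ 2) := by
    intro A F I x hF hI hJ
    have hB1 : F * I * (F * I) ≠ 0 := mul_ne_zero (mul_ne_zero hF hI) (mul_ne_zero hF hI)
    have hB2 : F * I * (1 + x * I) * F ≠ 0 :=
      mul_ne_zero (mul_ne_zero (mul_ne_zero hF hI) hJ) hF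
    have hB3 : (1 + x * I) * (F * I) ^ 2 ≠ 0 :=
      mul_ne_zero hJ (pow_ne_zero 2 (mul_ne_zero hF hI))
    rw [← mul_div_assoc, div_sub_div _ _ hB1 hB2, div_eq_div_iff (mul_ne_zero hB1 hB2) hB3]
    ring
  exact key _ _ _ _ hFm hIn hIn1

theorem stmt_13 (n : ℕ) :
    (toRF (qFact (2 * n)) / (toRF (qInt (n + 1)) * (toRF (qFact n)) ^ 2)
        = ∏ t ∈ Finset.Icc 2 n, toRF (qInt (t + n)) / toRF (qInt t))
    ∧ ∃ C : Polynomial ℚ,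
        toRF C = toRF (qFact (2 * n)) / (toRF (qInt (n + 1)) * (toRF (qFact n)) ^ 2) := by
  exact ⟨part1 n, part2 n⟩
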